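/- arXiv:1508.03516 — 5 statements merged into one kernel-verified Lean document; each statement's English description precedes it below -/
import Mathlib

section
/- Let a < b be real numbers, set h = b − a, and let f : ℝ → ℝ be continuously differentiable on [a,b]. Then sup_{x ∈ [a,b]} |f(x)| ≤ h^{−1/2} (∫_a^b f(x)² dx)^{1/2} + (1/√2) · h^{1/2} (∫_a^b f′(x)² dx)^{1/2}. In particular, if f is not identically zero on [a,b], the smoothness indicator satisfies 𝓕_{[a,b]}[f] ≤ 1. -/
/-- The smoothness indicator `𝓕_{[a,b]}[f]` for a nonzero function `f` on `[a,b]` with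
`h = b - a`:
`𝓕 = ‖f‖_{L^∞(a,b)} / (h^{-1/2} ‖f‖_{L²(a,b)} + (1/√2) h^{1/2} ‖f'‖_{L²(a,b)})`. -/
noncomputable def smoothnessIndicator (a b : ℝ) (f : ℝ → ℝ) : ℝ :=
  sSup ((fun x => |f x|) '' Set.Icc a b) /
    ((b - a) ^ (-(1 : ℝ) / 2) * Real.sqrt (∫ x in a..b, f x ^ 2) +
      (1 / Real.sqrt 2) * (b - a) ^ ((1 : ℝ) / 2) * Real.sqrt (∫ x in a..b, deriv f x ^ 2))

open MeasureTheory Set intervalIntegral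

/-- Cauchy–Schwarz for interval integrals, squared form. -/
lemma cs_sq (u v : ℝ) (huv : u ≤ v) (g : ℝ → ℝ)
    (hg : IntervalIntegrable g volume u v)
    (hg2 : IntervalIntegrable (fun y => g y ^ 2) volume u v) :
    (∫ y in u..v, g y) ^ 2 ≤ (v - u) * ∫ y in u..v, g y ^ 2 := by
  set I := ∫ y in u..v, g y with hI
  set J := ∫ y in u..v, g y ^ 2 with hJdef
  rcases eq_or_lt_of_le huv with h | h
  · simp [hI, hJdef, ← h]
  · have hL : 0 < v - u := sub_pos.2 h
    set t := I / (v - u) with ht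
    have hexp : (∫ y in u..v, (g y - t) ^ 2) = J - 2 * t * I + t ^ 2 * (v - u) := by
      have heq : ∀ y, (g y - t) ^ 2 = (g y ^ 2 - (2 * t) * g y) + t ^ 2 := by
        intro y; ring
      simp_rw [heq]
      rw [intervalIntegral.integral_add (hg2.sub (hg.const_mul (2 * t)))
            intervalIntegrable_const,
          intervalIntegral.integral_sub hg2 (hg.const_mul (2 * t)),
          intervalIntegral.integral_const_mul, intervalIntegral.integral_const]
      simp only [smul_eq_mul]; ring
    have h0 : 0 ≤ J - 2 * t * I + t ^ 2 * (v - u) := by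
      rw [← hexp]
      exact intervalIntegral.integral_nonneg huv fun x _ => sq_nonneg _
    have h1 : t * (v - u) = I := div_mul_cancel₀ _ hL.ne'
    nlinarith [sq_nonneg (I - t * (v - u))]

/-- Cauchy–Schwarz for interval integrals, absolute-value form. -/
lemma cs_abs (u v : ℝ) (huv : u ≤ v) (g : ℝ → ℝ)
    (hg : IntervalIntegrable (fun y => |g y|) volume u v)
    (hg2 : IntervalIntegrable (fun y => g y ^ 2) volume u v) :
    (∫ y in u..v, |g y|) ≤ Real.sqrt (v - u) * Real.sqrt (∫ y in u..v, g y ^ 2) := by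
  have h1 := cs_sq u v huv (fun y => |g y|) hg (by simpa [sq_abs] using hg2)
  simp_rw [sq_abs] at h1
  have h2 : 0 ≤ ∫ y in u..v, |g y| :=
    intervalIntegral.integral_nonneg huv fun x _ => abs_nonneg _
  calc (∫ y in u..v, |g y|) = Real.sqrt ((∫ y in u..v, |g y|) ^ 2) :=
        (Real.sqrt_sq h2).symm
    _ ≤ Real.sqrt ((v - u) * ∫ y in u..v, g y ^ 2) := Real.sqrt_le_sqrt h1
    _ = Real.sqrt (v - u) * Real.sqrt (∫ y in u..v, g y ^ 2) :=
        Real.sqrt_mul (by linarith) _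

/-- Sobolev-type embedding inequality
`sup_{x ∈ [a,b]} |f x| ≤ h^{-1/2} ‖f‖_{L²} + (1/√2) h^{1/2} ‖f'‖_{L²}`, and consequently the
smoothness indicator satisfies `𝓕_{[a,b]}[f] ≤ 1` whenever `f` is not identically zero. -/
theorem statement0 (a b : ℝ) (hab : a < b) (f : ℝ → ℝ)
    (hdiff : ∀ x ∈ Set.Icc a b, HasDerivAt f (deriv f x) x)
    (hcont : ContinuousOn (deriv f) (Set.Icc a b)) :
    sSup ((fun x => |f x|) '' Set.Icc a b) ≤
      (b - a) ^ (-(1 : ℝ) / 2) * Real.sqrt (∫ x in a..b, f x ^ 2) +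
        (1 / Real.sqrt 2) * (b - a) ^ ((1 : ℝ) / 2) * Real.sqrt (∫ x in a..b, deriv f x ^ 2) ∧
    ((∃ x ∈ Set.Icc a b, f x ≠ 0) → smoothnessIndicator a b f ≤ 1) := by
  have hba : 0 < b - a := sub_pos.2 hab
  have huIcc : Set.uIcc a b = Set.Icc a b := Set.uIcc_of_le hab.le
  have hfc : ContinuousOn f (Set.Icc a b) := fun x hx =>
    (hdiff x hx).continuousAt.continuousWithinAt
  set F2 := Real.sqrt (∫ x in a..b, f x ^ 2) with hF2
  set D2 := Real.sqrt (∫ x in a..b, deriv f x ^ 2) with hD2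
  have hD2n : 0 ≤ D2 := Real.sqrt_nonneg _
  have hd2i : IntervalIntegrable (fun y => deriv f y ^ 2) volume a b := by
    apply ContinuousOn.intervalIntegrable; rw [huIcc]; exact hcont.pow 2
  have hf2i : IntervalIntegrable (fun y => f y ^ 2) volume a b := by
    apply ContinuousOn.intervalIntegrable; rw [huIcc]; exact hfc.pow 2
  have hfabsi : IntervalIntegrable (fun y => |f y|) volume a b := by
    apply ContinuousOn.intervalIntegrable; rw [huIcc]; exact hfc.abs
  set s := Real.sqrt (b - a) with hs
  have hss : s * s = b - a := Real.mul_self_sqrt hba.le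
  have hspos : 0 < s := Real.sqrt_pos.2 hba
  set t2 := Real.sqrt 2 with ht2
  have ht2pos : 0 < t2 := Real.sqrt_pos.2 (by norm_num)
  have ht2s : t2 * t2 = 2 := Real.mul_self_sqrt (by norm_num)
  have e1 : (b - a) ^ ((1 : ℝ) / 2) = s := by
    rw [hs, Real.sqrt_eq_rpow]
  have e2 : (b - a) ^ (-(1 : ℝ) / 2) = s⁻¹ := by
    rw [show (-(1 : ℝ) / 2) = -((1 : ℝ) / 2) by ring, Real.rpow_neg hba.le, e1]
  -- derivative L² bound on subintervals
  have hB : ∀ u v : ℝ, a ≤ u → u ≤ v → v ≤ b →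
      |∫ y in u..v, deriv f y| ≤ Real.sqrt (v - u) * D2 := by
    intro u v hau huv hvb
    have hm : Set.uIcc u v ⊆ Set.Icc a b := by
      rw [Set.uIcc_of_le huv]; exact Set.Icc_subset_Icc hau hvb
    have hci : ContinuousOn (deriv f) (Set.uIcc u v) := hcont.mono hm
    calc |∫ y in u..v, deriv f y| ≤ ∫ y in u..v, |deriv f y| :=
          intervalIntegral.abs_integral_le_integral_abs huv
      _ ≤ Real.sqrt (v - u) * Real.sqrt (∫ y in u..v, deriv f y ^ 2) :=
          cs_abs u v huv _ (hci.abs.intervalIntegrable) ((hci.pow 2).intervalIntegrable)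
      _ ≤ Real.sqrt (v - u) * D2 := by
          apply mul_le_mul_of_nonneg_left _ (Real.sqrt_nonneg _)
          apply Real.sqrt_le_sqrt
          exact intervalIntegral.integral_mono_interval hau huv hvb
            (Filter.Eventually.of_forall fun y => sq_nonneg _) hd2i
  -- pointwise bound
  have key : ∀ x ∈ Set.Icc a b, |f x| ≤
      (b - a) ^ (-(1 : ℝ) / 2) * F2 + 1 / t2 * (b - a) ^ ((1 : ℝ) / 2) * D2 := by
    intro x hx
    have stepA : ∀ y ∈ Set.Icc a b, |f x| ≤ |f y| + Real.sqrt |x - y| * D2 := by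
      intro y hy
      have hd : |f x - f y| ≤ Real.sqrt |x - y| * D2 := by
        rcases le_total y x with hyx | hxy
        · have hsub : Set.uIcc y x ⊆ Set.Icc a b := by
            rw [Set.uIcc_of_le hyx]; exact Set.Icc_subset_Icc hy.1 hx.2
          have hftc : ∫ u in y..x, deriv f u = f x - f y :=
            intervalIntegral.integral_eq_sub_of_hasDerivAt
              (fun u hu => hdiff u (hsub hu)) ((hcont.mono hsub).intervalIntegrable)
          rw [← hftc, show |x - y| = x - y from abs_of_nonneg (by linarith)]
          exact hB y x hy.1 hyx hx.2
        · have hsub : Set.uIcc x y ⊆ Set.Icc a b := by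
            rw [Set.uIcc_of_le hxy]; exact Set.Icc_subset_Icc hx.1 hy.2
          have hftc : ∫ u in x..y, deriv f u = f y - f x :=
            intervalIntegral.integral_eq_sub_of_hasDerivAt
              (fun u hu => hdiff u (hsub hu)) ((hcont.mono hsub).intervalIntegrable)
          rw [abs_sub_comm, ← hftc,
            show |x - y| = y - x from by rw [abs_sub_comm]; exact abs_of_nonneg (by linarith)]
          exact hB x y hx.1 hxy hy.2
      have := abs_sub_abs_le_abs_sub (f x) (f y)
      linarith
    have hsqrtc : Continuous fun y : ℝ => Real.sqrt |x - y| :=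
      Real.continuous_sqrt.comp (continuous_const.sub continuous_id).abs
    have hI2 : IntervalIntegrable (fun y => Real.sqrt |x - y| * D2) volume a b :=
      (hsqrtc.mul continuous_const).intervalIntegrable a b
    have hBB : (b - a) * |f x| ≤
        (∫ y in a..b, |f y|) + (∫ y in a..b, Real.sqrt |x - y|) * D2 := by
      have hmono := intervalIntegral.integral_mono_on (f := fun _ => |f x|)
        (g := fun y => |f y| + Real.sqrt |x - y| * D2) (μ := volume) hab.le
        intervalIntegrable_const (hfabsi.add hI2) stepA
      rw [intervalIntegral.integral_const, smul_eq_mul] at hmono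
      rwa [intervalIntegral.integral_add hfabsi hI2,
        intervalIntegral.integral_mul_const] at hmono
    have hC : (∫ y in a..b, |f y|) ≤ s * F2 := cs_abs a b hab.le f hfabsi hf2i
    have habsint : (∫ y in a..b, |x - y|) = ((x - a) ^ 2 + (b - x) ^ 2) / 2 := by
      have i1 : IntervalIntegrable (fun y : ℝ => |x - y|) volume a x :=
        ((continuous_const.sub continuous_id).abs.intervalIntegrable a x)
      have i2 : IntervalIntegrable (fun y : ℝ => |x - y|) volume x b :=
        ((continuous_const.sub continuous_id).abs.intervalIntegrable x b)
      rw [← intervalIntegral.integral_add_adjacent_intervals i1 i2]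
      have e1' : (∫ y in a..x, |x - y|) = ∫ y in a..x, (x - y) := by
        apply intervalIntegral.integral_congr
        intro y hy
        rw [Set.uIcc_of_le hx.1] at hy
        exact abs_of_nonneg (by linarith [hy.2])
      have e2' : (∫ y in x..b, |x - y|) = ∫ y in x..b, (y - x) := by
        apply intervalIntegral.integral_congr
        intro y hy
        rw [Set.uIcc_of_le hx.2] at hy
        show |x - y| = y - x
        rw [abs_sub_comm]
        exact abs_of_nonneg (by linarith [hy.1])
      rw [e1', e2',
        intervalIntegral.integral_sub intervalIntegrable_const intervalIntegral.intervalIntegrable_id,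
        intervalIntegral.integral_sub intervalIntegral.intervalIntegrable_id intervalIntegrable_const,
        intervalIntegral.integral_const, intervalIntegral.integral_const,
        integral_id, integral_id]
      simp only [smul_eq_mul]; ring
    have hD : (∫ y in a..b, Real.sqrt |x - y|) ≤ s * ((b - a) / t2) := by
      have hfun1 : (fun y : ℝ => abs (Real.sqrt |x - y|)) = fun y : ℝ => Real.sqrt |x - y| :=
        funext fun y => abs_of_nonneg (Real.sqrt_nonneg _)
      have hfun2 : (fun y : ℝ => Real.sqrt |x - y| ^ 2) = fun y : ℝ => |x - y| :=
        funext fun y => Real.sq_sqrt (abs_nonneg _)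
      have hcs := cs_abs a b hab.le (fun y => Real.sqrt |x - y|)
        (by rw [hfun1]; exact hsqrtc.intervalIntegrable a b)
        (by rw [hfun2]; exact (continuous_const.sub continuous_id).abs.intervalIntegrable a b)
      rw [hfun1, hfun2, habsint] at hcs
      refine hcs.trans ?_
      rw [← hs]
      apply mul_le_mul_of_nonneg_left _ hspos.le
      have hle : ((x - a) ^ 2 + (b - x) ^ 2) / 2 ≤ ((b - a) / t2) ^ 2 := by
        have hprod : 0 ≤ (x - a) * (b - x) :=
          mul_nonneg (by linarith [hx.1]) (by linarith [hx.2])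
        rw [div_pow, show t2 ^ 2 = 2 by rw [sq]; exact ht2s]
        nlinarith
      calc Real.sqrt (((x - a) ^ 2 + (b - x) ^ 2) / 2) ≤ Real.sqrt (((b - a) / t2) ^ 2) :=
            Real.sqrt_le_sqrt hle
        _ = (b - a) / t2 := Real.sqrt_sq (div_nonneg hba.le ht2pos.le)
    -- combine
    have hfinal : (b - a) * |f x| ≤ s * F2 + s * ((b - a) / t2) * D2 := by
      have := mul_le_mul_of_nonneg_right hD hD2n
      linarith
    rw [e1, e2]
    rw [← mul_le_mul_iff_right₀ (mul_pos hspos hspos)]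
    calc s * s * |f x| = (b - a) * |f x| := by rw [hss]
      _ ≤ s * F2 + s * ((b - a) / t2) * D2 := hfinal
      _ = s * s * (s⁻¹ * F2 + 1 / t2 * s * D2) := by
          rw [← hss]; field_simp
  -- sup bound
  have hne : ((fun x => |f x|) '' Set.Icc a b).Nonempty :=
    ⟨|f a|, a, Set.left_mem_Icc.2 hab.le, rfl⟩
  have main : sSup ((fun x => |f x|) '' Set.Icc a b) ≤
      (b - a) ^ (-(1 : ℝ) / 2) * F2 + 1 / t2 * (b - a) ^ ((1 : ℝ) / 2) * D2 := by
    apply csSup_le hne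
    rintro z ⟨x, hx, rfl⟩
    exact key x hx
  refine ⟨main, ?_⟩
  rintro ⟨x0, hx0, hf0⟩
  have hbdd : BddAbove ((fun x => |f x|) '' Set.Icc a b) :=
    isCompact_Icc.bddAbove_image hfc.abs
  have hmem : |f x0| ∈ (fun x => |f x|) '' Set.Icc a b := ⟨x0, hx0, rfl⟩
  have hpos : 0 < sSup ((fun x => |f x|) '' Set.Icc a b) :=
    lt_of_lt_of_le (abs_pos.2 hf0) (le_csSup hbdd hmem)
  rw [smoothnessIndicator, ← hF2, ← hD2]
  exact (div_le_one (lt_of_lt_of_le hpos main)).mpr main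
end

section
/- Let a < b be real numbers with h = b − a, and let f : ℝ → ℝ be continuously differentiable on [a,b] and not identically zero on [a,b]. Then the smoothness indicator is invariant under the affine scaling to the reference interval: 𝓕_{[a,b]}[f] = 𝓕_{[−1,1]}[f ∘ φ_{[a,b]}]. -/
/-- The affine scaling map `φ_{[a,b]} : [-1,1] → [a,b]`, `x̂ ↦ (h/2) x̂ + (a+b)/2`. -/
noncomputable def affineScaling (a b : ℝ) : ℝ → ℝ :=
  fun t => (b - a) / 2 * t + (a + b) / 2

/-- The smoothness indicator is invariant under the affine scaling to the
reference interval: `𝓕_{[a,b]}[f] = 𝓕_{[-1,1]}[f ∘ φ_{[a,b]}]`. -/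
theorem statement1 (a b : ℝ) (hab : a < b) (f : ℝ → ℝ)
    (hdiff : ∀ x ∈ Set.Icc a b, HasDerivAt f (deriv f x) x)
    (hcont : ContinuousOn (deriv f) (Set.Icc a b))
    (hne : ∃ x ∈ Set.Icc a b, f x ≠ 0) :
    smoothnessIndicator a b f = smoothnessIndicator (-1) 1 (f ∘ affineScaling a b) := by
  have hc : (0:ℝ) < (b - a) / 2 := by linarith
  -- image of the sup set
  have himg : (fun x => |(f ∘ affineScaling a b) x|) '' Set.Icc (-1) 1
      = (fun x => |f x|) '' Set.Icc a b := by
    have h1 : (fun x => |(f ∘ affineScaling a b) x|)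
        = (fun x => |f x|) ∘ ((b - a) / 2 * · + (a + b) / 2) := by
      funext t; simp [affineScaling]
    rw [h1, Set.image_comp, Set.image_affine_Icc' hc,
      show (b - a) / 2 * (-1) + (a + b) / 2 = a by ring,
      show (b - a) / 2 * 1 + (a + b) / 2 = b by ring]
  -- change of variables
  have hint : ∀ g : ℝ → ℝ, (∫ t in (-1:ℝ)..1, g (affineScaling a b t))
      = ((b - a) / 2)⁻¹ * ∫ x in a..b, g x := by
    intro g
    have h := intervalIntegral.integral_comp_mul_add (a := (-1:ℝ)) (b := 1) g
      (ne_of_gt hc) ((a + b) / 2)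
    simp only [affineScaling]
    rw [h, show (b - a) / 2 * (-1) + (a + b) / 2 = a by ring,
      show (b - a) / 2 * 1 + (a + b) / 2 = b by ring, smul_eq_mul]
  have hφd : ∀ t : ℝ, HasDerivAt (affineScaling a b) ((b - a) / 2) t := by
    intro t
    have := ((hasDerivAt_id t).const_mul ((b - a) / 2)).add_const ((a + b) / 2)
    simp only [id_eq, mul_one] at this
    exact this
  have hderiv : ∀ t ∈ Set.uIcc (-1:ℝ) 1,
      deriv (f ∘ affineScaling a b) t = deriv f (affineScaling a b t) * ((b - a) / 2) := by
    intro t ht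
    rw [Set.uIcc_of_le (by norm_num : (-1:ℝ) ≤ 1)] at ht
    obtain ⟨h1, h2⟩ := ht
    have htm : affineScaling a b t ∈ Set.Icc a b := by
      constructor <;> simp only [affineScaling] <;> nlinarith
    exact ((hdiff _ htm).comp t (hφd t)).deriv
  have hI1 : (∫ t in (-1:ℝ)..1, (f ∘ affineScaling a b) t ^ 2)
      = ((b - a) / 2)⁻¹ * ∫ x in a..b, f x ^ 2 := hint (fun x => f x ^ 2)
  have hI2 : (∫ t in (-1:ℝ)..1, deriv (f ∘ affineScaling a b) t ^ 2)
      = ((b - a) / 2) * ∫ x in a..b, deriv f x ^ 2 := by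
    rw [intervalIntegral.integral_congr
      (g := fun t => ((b - a) / 2) ^ 2 * (fun x => deriv f x ^ 2) (affineScaling a b t))
      (fun t ht => by rw [hderiv t ht]; ring),
      intervalIntegral.integral_const_mul, hint (fun x => deriv f x ^ 2)]
    have hba' : b - a ≠ 0 := sub_ne_zero_of_ne hab.ne'
    field_simp
  unfold smoothnessIndicator
  rw [himg, hI1, hI2]
  congr 1
  -- denominators are equal
  set A := ∫ x in a..b, f x ^ 2 with hA
  set B := ∫ x in a..b, deriv f x ^ 2 with hB
  have hAnn : 0 ≤ A := intervalIntegral.integral_nonneg hab.le (fun x _ => sq_nonneg _)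
  have hBnn : 0 ≤ B := intervalIntegral.integral_nonneg hab.le (fun x _ => sq_nonneg _)
  have hba : (0:ℝ) < b - a := by linarith
  have h2 : (0:ℝ) ≤ 2 := by norm_num
  have e1 : (b - a) ^ (-(1:ℝ) / 2) = (Real.sqrt (b - a))⁻¹ := by
    rw [show (-(1:ℝ)/2) = -(1/2) by ring, Real.rpow_neg hba.le, ← Real.sqrt_eq_rpow]
  have e2 : (b - a) ^ ((1:ℝ) / 2) = Real.sqrt (b - a) := (Real.sqrt_eq_rpow _).symm
  have e3 : ((1:ℝ) - (-1)) ^ (-(1:ℝ) / 2) = (Real.sqrt 2)⁻¹ := by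
    rw [show ((1:ℝ) - (-1)) = 2 by norm_num,
      show (-(1:ℝ)/2) = -(1/2) by ring, Real.rpow_neg h2, ← Real.sqrt_eq_rpow]
  have e4 : ((1:ℝ) - (-1)) ^ ((1:ℝ) / 2) = Real.sqrt 2 := by
    rw [show ((1:ℝ) - (-1)) = 2 by norm_num, ← Real.sqrt_eq_rpow]
  have e5 : Real.sqrt (((b - a) / 2)⁻¹ * A)
      = (Real.sqrt (b - a) / Real.sqrt 2)⁻¹ * Real.sqrt A := by
    rw [Real.sqrt_mul (by positivity), Real.sqrt_inv, Real.sqrt_div hba.le]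
  have e6 : Real.sqrt ((b - a) / 2 * B)
      = Real.sqrt (b - a) / Real.sqrt 2 * Real.sqrt B := by
    rw [Real.sqrt_mul hc.le, Real.sqrt_div hba.le]
  rw [e1, e2, e3, e4, e5, e6]
  have hs : Real.sqrt (b - a) ≠ 0 := by positivity
  have ht : Real.sqrt 2 ≠ 0 := by positivity
  field_simp
  try ring
end

section
/- Let a₀, a₁ ∈ ℝ with a₀ ≠ 0, and let g : ℝ → ℝ be the linear function g(x) = a₀ + a₁·x. Then the smoothness indicator of g on the reference interval [−1,1] equals 𝓕_{[−1,1]}[g] = (1 + ξ)/(√(1 + ξ²/3) + √2·ξ), where ξ = |a₁/a₀|. -/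
theorem sup_lin (a₀ a₁ : ℝ) :
    sSup ((fun x => |a₀ + a₁ * x|) '' Set.Icc (-1:ℝ) 1) = |a₀| + |a₁| := by
  apply IsGreatest.csSup_eq
  constructor
  · rcases le_or_gt 0 (a₀ * a₁) with h | h
    · refine ⟨1, by norm_num, ?_⟩
      show |a₀ + a₁ * 1| = _
      rcases mul_nonneg_iff.mp h with ⟨h1, h2⟩ | ⟨h1, h2⟩
      · rw [mul_one, abs_of_nonneg h1, abs_of_nonneg h2, abs_of_nonneg (by linarith)]
      · rw [mul_one, abs_of_nonpos h1, abs_of_nonpos h2, abs_of_nonpos (by linarith)]; ring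
    · refine ⟨-1, by norm_num, ?_⟩
      show |a₀ + a₁ * (-1)| = _
      rcases mul_neg_iff.mp h with ⟨h1, h2⟩ | ⟨h1, h2⟩
      · rw [abs_of_pos h1, abs_of_neg h2, abs_of_pos (by nlinarith)]; ring
      · rw [abs_of_neg h1, abs_of_pos h2, abs_of_neg (by nlinarith)]; ring
  · rintro y ⟨x, ⟨hx1, hx2⟩, rfl⟩
    calc |a₀ + a₁ * x| ≤ |a₀| + |a₁ * x| := abs_add_le _ _
    _ ≤ |a₀| + |a₁| := by
        rw [abs_mul]
        have : |x| ≤ 1 := abs_le.mpr ⟨hx1, hx2⟩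
        nlinarith [abs_nonneg a₁, abs_nonneg x]

theorem int_lin (a₀ a₁ : ℝ) :
    (∫ x in (-1:ℝ)..1, (a₀ + a₁ * x) ^ 2) = 2 * a₀ ^ 2 + 2 / 3 * a₁ ^ 2 := by
  have h : ∀ x : ℝ, (a₀ + a₁ * x) ^ 2 = a₀ ^ 2 + (2 * a₀ * a₁) * x + a₁ ^ 2 * x ^ 2 := by
    intro x; ring
  simp_rw [h]
  have i1 : IntervalIntegrable (fun x : ℝ => a₀ ^ 2) MeasureTheory.volume (-1) 1 :=
    (continuous_const).intervalIntegrable _ _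
  have i2 : IntervalIntegrable (fun x : ℝ => (2 * a₀ * a₁) * x) MeasureTheory.volume (-1) 1 :=
    (continuous_const.mul continuous_id).intervalIntegrable _ _
  have i3 : IntervalIntegrable (fun x : ℝ => a₁ ^ 2 * x ^ 2) MeasureTheory.volume (-1) 1 :=
    (continuous_const.mul (continuous_pow 2)).intervalIntegrable _ _
  rw [intervalIntegral.integral_add (i1.add i2) i3,
    intervalIntegral.integral_add i1 i2,
    intervalIntegral.integral_const_mul, intervalIntegral.integral_const_mul,
    intervalIntegral.integral_const, integral_id, integral_pow]
  norm_num; ring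

theorem deriv_lin (a₀ a₁ : ℝ) (x : ℝ) : deriv (fun x => a₀ + a₁ * x) x = a₁ := by
  exact (((hasDerivAt_id x).const_mul a₁).const_add a₀).deriv.trans (mul_one a₁)

/-- For the linear function `g x = a₀ + a₁ x` with `a₀ ≠ 0`, the smoothness
indicator on the reference interval `[-1,1]` equals
`(1 + ξ)/(√(1 + ξ²/3) + √2 ξ)` with `ξ = |a₁/a₀|`. -/
theorem statement2 (a₀ a₁ : ℝ) (ha₀ : a₀ ≠ 0) :
    smoothnessIndicator (-1) 1 (fun x => a₀ + a₁ * x) =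
      (1 + |a₁ / a₀|) /
        (Real.sqrt (1 + |a₁ / a₀| ^ 2 / 3) + Real.sqrt 2 * |a₁ / a₀|) := by
  have hA : (0:ℝ) < |a₀| := abs_pos.mpr ha₀
  have hs2 : (0:ℝ) < Real.sqrt 2 := Real.sqrt_pos.mpr (by norm_num)
  unfold smoothnessIndicator
  have hd : (∫ x in (-1:ℝ)..1, deriv (fun x => a₀ + a₁ * x) x ^ 2) = 2 * a₁ ^ 2 := by
    simp_rw [deriv_lin]
    rw [intervalIntegral.integral_const]
    norm_num
  rw [sup_lin, int_lin, hd, show ((1:ℝ) - (-1)) = 2 by norm_num]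
  have hr1 : (2:ℝ) ^ ((1:ℝ)/2) = Real.sqrt 2 := (Real.sqrt_eq_rpow 2).symm
  have hr2 : (2:ℝ) ^ (-(1:ℝ)/2) = (Real.sqrt 2)⁻¹ := by
    rw [neg_div, Real.rpow_neg (by norm_num), hr1]
  rw [hr1, hr2]
  set S := Real.sqrt (a₀ ^ 2 + a₁ ^ 2 / 3) with hS
  have hSpos : 0 < S := Real.sqrt_pos.mpr (by positivity)
  have e2 : Real.sqrt (2 * a₀ ^ 2 + 2 / 3 * a₁ ^ 2) = Real.sqrt 2 * S := by
    rw [hS, ← Real.sqrt_mul (by norm_num : (0:ℝ) ≤ 2)]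
    ring_nf
  have e3 : Real.sqrt (2 * a₁ ^ 2) = Real.sqrt 2 * |a₁| := by
    rw [Real.sqrt_mul (by norm_num : (0:ℝ) ≤ 2), Real.sqrt_sq_eq_abs]
  have e4 : Real.sqrt (1 + |a₁ / a₀| ^ 2 / 3) = S / |a₀| := by
    have h : (1 + |a₁ / a₀| ^ 2 / 3) = (a₀ ^ 2 + a₁ ^ 2 / 3) / |a₀| ^ 2 := by
      rw [abs_div, div_pow, sq_abs, sq_abs]
      rw [eq_div_iff (pow_ne_zero 2 ha₀)]
      field_simp
    rw [h, Real.sqrt_div (by positivity) _, Real.sqrt_sq hA.le, hS]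
  rw [e2, e3, e4, abs_div]
  rw [div_eq_div_iff (by positivity) (by positivity)]
  field_simp
end

section
/- Let a < b be real numbers with h = b − a, let p ≥ 1 be an integer, and let a₀, …, a_p ∈ ℝ with a_{p−1} ≠ 0. Define f : [a,b] → ℝ by f(x) = Σ_{l=0}^{p} a_l · L_l(φ_{[a,b]}^{−1}(x)). Then the smoothness indicator of the (p−1)-st derivative of f satisfies 𝓕_{[a,b]}[f^{(p−1)}] = (1 + ξ_p)/(√(1 + ξ_p²/3) + √2·ξ_p), where ξ_p = (2p − 1)·|a_p|/|a_{p−1}|. -/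
/-- The Legendre polynomial `L_n` on `ℝ`, defined via the Rodrigues formula. -/
noncomputable def legendre (n : ℕ) : ℝ → ℝ :=
  fun x => (1 / ((2 : ℝ) ^ n * (n.factorial : ℝ))) *
    iteratedDeriv n (fun y => (y ^ 2 - 1) ^ n) x

open Polynomial

lemma iteratedDeriv_polyeval (P : ℝ[X]) (n : ℕ) :
    iteratedDeriv n (fun x => P.eval x) = fun x => (derivative^[n] P).eval x := by
  induction n generalizing P with
  | zero => simp
  | succ n ih =>
    rw [iteratedDeriv_succ', Function.iterate_succ_apply]
    rw [← ih P.derivative]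
    have : (deriv fun x => eval x P) = fun x => eval x (derivative P) :=
      funext fun x => Polynomial.deriv P
    rw [this]

lemma iterate_derivative_comp_affine (P : ℝ[X]) (u v : ℝ) (n : ℕ) :
    derivative^[n] (P.comp (C u * X + C v)) =
      C (u ^ n) * (derivative^[n] P).comp (C u * X + C v) := by
  induction n generalizing P with
  | zero => simp
  | succ n ih =>
    rw [Function.iterate_succ_apply, Function.iterate_succ_apply]
    rw [derivative_comp]
    simp only [derivative_add, derivative_mul, derivative_C, derivative_X, zero_mul, mul_one,
      zero_add, add_zero]
    rw [iterate_derivative_C_mul, ih, pow_succ, Polynomial.C_mul, mul_comm (C (u^n)) (C u),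
      mul_assoc]

lemma coeff_odd_sq_sub_one_pow (m k : ℕ) : ((X ^ 2 - 1 : ℝ[X]) ^ m).coeff (2 * k + 1) = 0 := by
  have : ((X ^ 2 - 1 : ℝ[X]) ^ m) = expand ℝ 2 ((X - 1) ^ m) := by
    rw [map_pow, map_sub, expand_X, map_one]
  rw [this, coeff_expand (by norm_num)]
  rw [if_neg (by omega)]

lemma monic_ssop (m : ℕ) : ((X ^ 2 - 1 : ℝ[X]) ^ m).Monic := by
  have : (X ^ 2 - 1 : ℝ[X]) = X ^ 2 - C 1 := by simp
  exact ((monic_X_pow_sub_C (1:ℝ) (by norm_num)).pow m)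

lemma natDegree_ssop (m : ℕ) : ((X ^ 2 - 1 : ℝ[X]) ^ m).natDegree = 2 * m := by
  have : (X ^ 2 - 1 : ℝ[X]) = X ^ 2 - C 1 := by simp
  rw [this, natDegree_pow, natDegree_X_pow_sub_C, Nat.mul_comm]

lemma iterate_deriv_top (m : ℕ) :
    derivative^[2 * m] ((X ^ 2 - 1 : ℝ[X]) ^ m) = C (((2 * m).factorial : ℝ)) := by
  set P : ℝ[X] := (X ^ 2 - 1) ^ m with hP
  have hdeg : (derivative^[2 * m] P).natDegree ≤ 0 := by
    have := natDegree_iterate_derivative P (2 * m)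
    rw [natDegree_ssop] at this
    omega
  rw [eq_C_of_natDegree_le_zero hdeg, coeff_iterate_derivative]
  have h1 : P.coeff (0 + 2 * m) = 1 := by
    have := (monic_ssop m).coeff_natDegree
    rwa [natDegree_ssop, zero_add] at *
  rw [h1, zero_add, Nat.descFactorial_self]
  simp

lemma iterate_deriv_lin (m : ℕ) :
    derivative^[2 * m + 1] ((X ^ 2 - 1 : ℝ[X]) ^ (m + 1)) =
      C (((2 * m + 2).factorial : ℝ)) * X := by
  set P : ℝ[X] := (X ^ 2 - 1) ^ (m + 1) with hP
  have hdeg : (derivative^[2 * m + 1] P).natDegree ≤ 1 := by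
    have := natDegree_iterate_derivative P (2 * m + 1)
    rw [natDegree_ssop] at this
    omega
  have h1 : (derivative^[2 * m + 1] P).coeff 1 = ((2 * m + 2).factorial : ℝ) := by
    rw [coeff_iterate_derivative]
    have hc : P.coeff (1 + (2 * m + 1)) = 1 := by
      have := (monic_ssop (m + 1)).coeff_natDegree
      rw [natDegree_ssop] at this
      convert this using 2
      omega
    rw [hc]
    have : (1 + (2 * m + 1)).descFactorial (2 * m + 1) = (2 * m + 2).factorial := by
      have h2 : 1 + (2 * m + 1) = (2 * m + 1) + 1 := by omega
      rw [h2, Nat.descFactorial_eq_factorial_mul_choose, Nat.choose_succ_self_right,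
        mul_comm, ← Nat.factorial_succ]
    rw [this]
    simp
  have h0 : (derivative^[2 * m + 1] P).coeff 0 = 0 := by
    rw [coeff_iterate_derivative, zero_add]
    have := coeff_odd_sq_sub_one_pow (m + 1) m
    rw [this]
    simp
  rw [eq_X_add_C_of_natDegree_le_one hdeg, h0, h1]
  simp

lemma abs_add_eq_of_nonneg' (α β : ℝ) (h : 0 ≤ α * β) : |α + β| = |α| + |β| := by
  have hab : |α| * |β| = α * β := by rw [← abs_mul, abs_of_nonneg h]
  have h1 : (α + β) ^ 2 = (|α| + |β|) ^ 2 := by nlinarith [sq_abs α, sq_abs β]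
  calc |α + β| = Real.sqrt ((α + β) ^ 2) := (Real.sqrt_sq_eq_abs _).symm
    _ = Real.sqrt ((|α| + |β|) ^ 2) := by rw [h1]
    _ = |α| + |β| := Real.sqrt_sq (by positivity)

lemma abs_sub_eq_of_nonpos' (α β : ℝ) (h : α * β ≤ 0) : |α - β| = |α| + |β| := by
  have := abs_add_eq_of_nonneg' α (-β) (by nlinarith)
  simpa [sub_eq_add_neg] using this

lemma sup_affine (a b : ℝ) (hab : a < b) (α β : ℝ) :
    sSup ((fun x => |(fun x => α + β * ((2 * x - (a + b)) / (b - a))) x|) '' Set.Icc a b) =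
      |α| + |β| := by
  have h0 : (0:ℝ) < b - a := by linarith
  apply IsGreatest.csSup_eq
  constructor
  · rcases le_or_gt 0 (α * β) with h | h
    · refine ⟨b, Set.right_mem_Icc.mpr hab.le, ?_⟩
      have : (2 * b - (a + b)) / (b - a) = 1 := by field_simp; ring
      simp only [this, mul_one]
      exact abs_add_eq_of_nonneg' α β h
    · refine ⟨a, Set.left_mem_Icc.mpr hab.le, ?_⟩
      have : (2 * a - (a + b)) / (b - a) = -1 := by field_simp; ring
      simp only [this, mul_neg_one, ← sub_eq_add_neg]
      exact abs_sub_eq_of_nonpos' α β h.le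
  · rintro y ⟨x, hx, rfl⟩
    have ht : |(2 * x - (a + b)) / (b - a)| ≤ 1 := by
      rw [abs_div, abs_of_pos h0, div_le_one h0, abs_le]
      exact ⟨by linarith [hx.1, hx.2], by linarith [hx.1, hx.2]⟩
    calc |α + β * ((2 * x - (a + b)) / (b - a))|
        ≤ |α| + |β * ((2 * x - (a + b)) / (b - a))| := abs_add_le _ _
      _ = |α| + |β| * |(2 * x - (a + b)) / (b - a)| := by rw [abs_mul]
      _ ≤ |α| + |β| * 1 := by gcongr
      _ = |α| + |β| := by ring

lemma integral_affine_sq (a b : ℝ) (hab : a < b) (α β : ℝ) :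
    ∫ x in a..b, (α + β * ((2 * x - (a + b)) / (b - a))) ^ 2 =
      (b - a) * (α ^ 2 + β ^ 2 / 3) := by
  have h0 : (0:ℝ) < b - a := by linarith
  have hne : b - a ≠ 0 := h0.ne'
  have hsub : ∫ x in a..b, (fun t => (α + β * t) ^ 2) ((2 / (b - a)) * x + (-(a + b) / (b - a)))
      = ((b - a) / 2) * ∫ t in (-1 : ℝ)..1, (α + β * t) ^ 2 := by
    have := intervalIntegral.mul_integral_comp_mul_add (a := a) (b := b)
      (f := fun t => (α + β * t) ^ 2) (c := 2 / (b - a)) (d := -(a + b) / (b - a))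
    have e1 : 2 / (b - a) * a + -(a + b) / (b - a) = -1 := by
      rw [div_mul_eq_mul_div, ← add_div, div_eq_iff hne]
      ring
    have e2 : 2 / (b - a) * b + -(a + b) / (b - a) = 1 := by
      rw [div_mul_eq_mul_div, ← add_div, div_eq_iff hne]
      ring
    rw [e1, e2] at this
    rw [← this]
    have hc : 2 / (b - a) ≠ 0 := by positivity
    field_simp
  have harg : ∀ x : ℝ, (2 / (b - a)) * x + (-(a + b) / (b - a)) = (2 * x - (a + b)) / (b - a) := by
    intro x; field_simp; ring
  have hint : ∫ t in (-1 : ℝ)..1, (α + β * t) ^ 2 = 2 * α ^ 2 + 2 / 3 * β ^ 2 := by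
    have hexp : ∀ t : ℝ, (α + β * t) ^ 2 = α ^ 2 + 2 * α * β * t + β ^ 2 * t ^ 2 := by
      intro t; ring
    simp_rw [hexp]
    rw [intervalIntegral.integral_add ((by continuity : Continuous _).intervalIntegrable _ _) ((by continuity : Continuous _).intervalIntegrable _ _),
      intervalIntegral.integral_add ((by continuity : Continuous _).intervalIntegrable _ _) ((by continuity : Continuous _).intervalIntegrable _ _),
      intervalIntegral.integral_const, intervalIntegral.integral_const_mul,
      intervalIntegral.integral_const_mul, integral_id, integral_pow]
    norm_num
    ring
  calc ∫ x in a..b, (α + β * ((2 * x - (a + b)) / (b - a))) ^ 2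
      = ∫ x in a..b, (fun t => (α + β * t) ^ 2) ((2 / (b - a)) * x + (-(a + b) / (b - a))) := by
        apply intervalIntegral.integral_congr
        intro x _
        dsimp only
        rw [harg]
    _ = ((b - a) / 2) * (2 * α ^ 2 + 2 / 3 * β ^ 2) := by rw [hsub, hint]
    _ = (b - a) * (α ^ 2 + β ^ 2 / 3) := by ring

lemma smoothnessIndicator_affine (a b : ℝ) (hab : a < b) (α β : ℝ) (hα : α ≠ 0) :
    smoothnessIndicator a b (fun x => α + β * ((2 * x - (a + b)) / (b - a))) =
      (1 + |β| / |α|) /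
        (Real.sqrt (1 + (|β| / |α|) ^ 2 / 3) + Real.sqrt 2 * (|β| / |α|)) := by
  have h0 : (0:ℝ) < b - a := by linarith
  have hne : b - a ≠ 0 := h0.ne'
  have hderiv : deriv (fun x => α + β * ((2 * x - (a + b)) / (b - a))) =
      fun _ => β * (2 / (b - a)) := by
    funext x
    have h1 : HasDerivAt (fun x : ℝ => (2 * x - (a + b)) / (b - a)) (2 / (b - a)) x := by
      simpa using (((hasDerivAt_id x).const_mul 2).sub_const (a + b)).div_const (b - a)
    exact ((h1.const_mul β).const_add α).deriv
  have hI2 : ∫ x in a..b, (deriv (fun x => α + β * ((2 * x - (a + b)) / (b - a))) x) ^ 2 =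
      4 * β ^ 2 / (b - a) := by
    rw [hderiv]
    rw [intervalIntegral.integral_const, smul_eq_mul]
    field_simp
    ring
  rw [smoothnessIndicator, sup_affine a b hab α β, integral_affine_sq a b hab α β, hI2]
  -- simplify the rpow's and square roots
  have sh := Real.sqrt_pos.mpr h0
  have e1 : (b - a) ^ (-(1:ℝ) / 2) = (Real.sqrt (b - a))⁻¹ := by
    rw [show (-(1:ℝ) / 2) = -(1 / 2) by norm_num, Real.rpow_neg h0.le, ← Real.sqrt_eq_rpow]
  have e2 : (b - a) ^ ((1:ℝ) / 2) = Real.sqrt (b - a) := (Real.sqrt_eq_rpow _).symm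
  have e3 : Real.sqrt ((b - a) * (α ^ 2 + β ^ 2 / 3)) =
      Real.sqrt (b - a) * Real.sqrt (α ^ 2 + β ^ 2 / 3) := Real.sqrt_mul h0.le _
  have e4 : Real.sqrt (4 * β ^ 2 / (b - a)) = 2 * |β| / Real.sqrt (b - a) := by
    rw [Real.sqrt_div (by positivity)]
    congr 1
    rw [show (4 : ℝ) * β ^ 2 = (2 * |β|) ^ 2 by rw [mul_pow, sq_abs]; norm_num]
    exact Real.sqrt_sq (by positivity)
  rw [e1, e2, e3, e4]
  have hden : (Real.sqrt (b - a))⁻¹ * (Real.sqrt (b - a) * Real.sqrt (α ^ 2 + β ^ 2 / 3)) +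
      1 / Real.sqrt 2 * Real.sqrt (b - a) * (2 * |β| / Real.sqrt (b - a)) =
      Real.sqrt (α ^ 2 + β ^ 2 / 3) + Real.sqrt 2 * |β| := by
    have h2 : Real.sqrt 2 * Real.sqrt 2 = 2 := Real.mul_self_sqrt (by norm_num)
    have hs2 : Real.sqrt 2 ≠ 0 := by positivity
    have t1 : (Real.sqrt (b - a))⁻¹ * (Real.sqrt (b - a) * Real.sqrt (α ^ 2 + β ^ 2 / 3)) =
        Real.sqrt (α ^ 2 + β ^ 2 / 3) := by
      rw [← mul_assoc, inv_mul_cancel₀ sh.ne', one_mul]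
    have t2 : 1 / Real.sqrt 2 * Real.sqrt (b - a) * (2 * |β| / Real.sqrt (b - a)) =
        Real.sqrt 2 * |β| := by
      rw [show 1 / Real.sqrt 2 * Real.sqrt (b - a) * (2 * |β| / Real.sqrt (b - a)) =
        (Real.sqrt (b - a) / Real.sqrt (b - a)) * (2 / Real.sqrt 2 * |β|) by ring,
        div_self sh.ne', one_mul]
      congr 1
      rw [div_eq_iff hs2]
      exact h2.symm
    rw [t1, t2]
  rw [hden]
  -- final algebra
  have hA : (0:ℝ) < |α| := abs_pos.mpr hα
  set r : ℝ := |β| / |α| with hrdef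
  have k2 : |β| = |α| * r := by rw [hrdef]; field_simp
  have k1 : Real.sqrt (α ^ 2 + β ^ 2 / 3) = |α| * Real.sqrt (1 + r ^ 2 / 3) := by
    have hr2 : r ^ 2 = β ^ 2 / α ^ 2 := by rw [hrdef, div_pow, sq_abs, sq_abs]
    rw [hr2, ← Real.sqrt_sq_eq_abs, ← Real.sqrt_mul (by positivity)]
    congr 1
    field_simp
  rw [k1, k2]
  rw [show |α| + |α| * r = |α| * (1 + r) by ring,
    show |α| * Real.sqrt (1 + r ^ 2 / 3) + Real.sqrt 2 * (|α| * r) =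
      |α| * (Real.sqrt (1 + r ^ 2 / 3) + Real.sqrt 2 * r) by ring]
  rw [mul_div_mul_left _ _ hA.ne']

lemma legendre_eval (l : ℕ) (y : ℝ) :
    legendre l y =
      (C (1 / ((2:ℝ) ^ l * (l.factorial : ℝ))) *
        derivative^[l] ((X ^ 2 - 1 : ℝ[X]) ^ l)).eval y := by
  rw [legendre]
  have hfn : (fun y : ℝ => (y ^ 2 - 1) ^ l) = fun y => (((X : ℝ[X]) ^ 2 - 1) ^ l).eval y := by
    funext z; simp
  rw [hfn, iteratedDeriv_polyeval]
  simp [eval_mul]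


/-- For `f = Σ_{l=0}^p c_l L_l ∘ φ_{[a,b]}⁻¹` with `c_{p-1} ≠ 0`, the
smoothness indicator of `f^{(p-1)}` equals `(1 + ξ_p)/(√(1 + ξ_p²/3) + √2 ξ_p)` with
`ξ_p = (2p - 1) |c_p| / |c_{p-1}|`. Here `φ_{[a,b]}⁻¹(x) = (2x - (a+b))/(b-a)`. -/
theorem statement4 (a b : ℝ) (hab : a < b) (p : ℕ) (hp : 1 ≤ p)
    (c : ℕ → ℝ) (hc : c (p - 1) ≠ 0) :
    smoothnessIndicator a b
        (iteratedDeriv (p - 1)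
          (fun x => ∑ l ∈ Finset.range (p + 1),
            c l * legendre l ((2 * x - (a + b)) / (b - a)))) =
      (1 + (2 * (p : ℝ) - 1) * |c p| / |c (p - 1)|) /
        (Real.sqrt (1 + ((2 * (p : ℝ) - 1) * |c p| / |c (p - 1)|) ^ 2 / 3) +
          Real.sqrt 2 * ((2 * (p : ℝ) - 1) * |c p| / |c (p - 1)|)) := by

  obtain ⟨q, rfl⟩ := Nat.exists_eq_succ_of_ne_zero (by omega : p ≠ 0)
  simp only [Nat.succ_sub_one] at hc ⊢
  have h0 : (0:ℝ) < b - a := by linarith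
  have hne : b - a ≠ 0 := h0.ne'
  set u : ℝ := 2 / (b - a) with hu
  have hupos : 0 < u := by positivity
  -- constants
  set A₀ : ℝ := ((2 * q).factorial : ℝ) / (2 ^ q * (q.factorial : ℝ)) with hA₀
  set B₀ : ℝ := ((2 * q + 2).factorial : ℝ) / (2 ^ (q + 1) * ((q + 1).factorial : ℝ)) with hB₀
  have hA₀pos : 0 < A₀ := by
    rw [hA₀]; positivity
  have hBA : B₀ = (2 * (q:ℝ) + 1) * A₀ := by
    rw [hB₀, hA₀]
    have h1 : ((2 * q + 2).factorial : ℝ) =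
        (2 * (q:ℝ) + 2) * ((2 * (q:ℝ) + 1) * ((2 * q).factorial : ℝ)) := by
      rw [show 2 * q + 2 = (2 * q + 1) + 1 from rfl, Nat.factorial_succ, Nat.factorial_succ]
      push_cast; ring
    have h2 : (((q + 1).factorial : ℕ) : ℝ) = ((q:ℝ) + 1) * (q.factorial : ℝ) := by
      rw [Nat.factorial_succ]; push_cast; ring
    rw [h1, h2]
    have hq : (q.factorial : ℝ) ≠ 0 := Nat.cast_ne_zero.mpr q.factorial_ne_zero
    field_simp
    ring
  -- polynomial setup
  set M : ℝ[X] := C u * X + C (-(a + b) / (b - a)) with hM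
  set Q : ℕ → ℝ[X] := fun l => C (1 / ((2:ℝ) ^ l * (l.factorial : ℝ))) *
    derivative^[l] ((X ^ 2 - 1 : ℝ[X]) ^ l) with hQ
  set R : ℝ[X] := ∑ l ∈ Finset.range (q + 1 + 1), C (c l) * Q l with hR
  have hMeval : ∀ x : ℝ, M.eval x = (2 * x - (a + b)) / (b - a) := by
    intro x
    rw [hM]
    simp [hu]
    ring
  have hfR : (fun x => ∑ l ∈ Finset.range (q + 1 + 1),
      c l * legendre l ((2 * x - (a + b)) / (b - a)))
      = fun x => (R.comp M).eval x := by
    funext x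
    rw [eval_comp, hMeval, hR, eval_finset_sum]
    apply Finset.sum_congr rfl
    intro l _
    rw [eval_mul, eval_C, legendre_eval, hQ]
  have hDR : derivative^[q] R =
      C (c q * A₀) + C (c (q + 1) * B₀) * X := by
    rw [hR, iterate_derivative_sum, Finset.sum_range_succ, Finset.sum_range_succ]
    have hz : ∀ l ∈ Finset.range q, derivative^[q] (C (c l) * Q l) = 0 := by
      intro l hl
      rw [Finset.mem_range] at hl
      rw [hQ, iterate_derivative_C_mul, iterate_derivative_C_mul,
        ← Function.iterate_add_apply,
        Polynomial.iterate_derivative_eq_zero (by rw [natDegree_ssop]; omega)]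
      simp
    rw [Finset.sum_eq_zero hz, zero_add]
    have ht1 : derivative^[q] (C (c q) * Q q) = C (c q * A₀) := by
      rw [hQ, iterate_derivative_C_mul, iterate_derivative_C_mul,
        ← Function.iterate_add_apply, show q + q = 2 * q by omega, iterate_deriv_top]
      rw [← C_mul, ← C_mul, hA₀]
      congr 1
      ring
    have ht2 : derivative^[q] (C (c (q + 1)) * Q (q + 1)) = C (c (q + 1) * B₀) * X := by
      rw [hQ, iterate_derivative_C_mul, iterate_derivative_C_mul,
        ← Function.iterate_add_apply, show q + (q + 1) = 2 * q + 1 by omega,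
        iterate_deriv_lin]
      rw [← mul_assoc, ← mul_assoc, ← C_mul, ← C_mul, hB₀]
      congr 2
      ring
    rw [ht1, ht2]
  have hfun : (iteratedDeriv q (fun x => ∑ l ∈ Finset.range (q + 1 + 1),
        c l * legendre l ((2 * x - (a + b)) / (b - a))))
      = fun x => u ^ q * (c q * A₀) +
          u ^ q * (c (q + 1) * B₀) * ((2 * x - (a + b)) / (b - a)) := by
    rw [hfR, iteratedDeriv_polyeval]
    funext x
    rw [hM, iterate_derivative_comp_affine, hDR]
    simp only [eval_mul, eval_add, eval_C, eval_X, eval_comp]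
    have hMx : u * x + -(a + b) / (b - a) = (2 * x - (a + b)) / (b - a) := by
      rw [hu]; field_simp; ring
    rw [hMx]
    ring
  rw [hfun]
  have hαne : u ^ q * (c q * A₀) ≠ 0 := by
    apply mul_ne_zero (pow_ne_zero _ hupos.ne')
    exact mul_ne_zero hc hA₀pos.ne'
  rw [smoothnessIndicator_affine a b hab _ _ hαne]
  have hratio : |u ^ q * (c (q + 1) * B₀)| / |u ^ q * (c q * A₀)| =
      (2 * ((q + 1 : ℕ) : ℝ) - 1) * |c (q + 1)| / |c q| := by
    rw [abs_mul, abs_mul, abs_mul, abs_mul]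
    rw [mul_div_mul_left _ _ (by positivity : |u ^ q| ≠ 0)]
    rw [abs_of_pos hA₀pos, hBA, abs_of_pos (by positivity : (0:ℝ) < (2 * (q:ℝ) + 1) * A₀)]
    rw [show |c (q + 1)| * ((2 * (q:ℝ) + 1) * A₀) = (|c (q + 1)| * (2 * (q:ℝ) + 1)) * A₀ by ring]
    rw [mul_div_mul_right _ _ hA₀pos.ne']
    push_cast
    ring
  rw [hratio]
end

section
/- For every real ξ ≥ 0 one has g(ξ) = (1 + ξ)/(√(1 + ξ²/3) + √2·ξ) > √3/(√6 + 1). -/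
/-- For every `ξ ≥ 0`, `(1 + ξ)/(√(1 + ξ²/3) + √2 ξ) > √3/(√6 + 1)`. -/
theorem statement6 (ξ : ℝ) (hξ : 0 ≤ ξ) :
    Real.sqrt 3 / (Real.sqrt 6 + 1) <
      (1 + ξ) / (Real.sqrt (1 + ξ ^ 2 / 3) + Real.sqrt 2 * ξ) := by
  have h6 : (0:ℝ) < Real.sqrt 6 := Real.sqrt_pos.mpr (by norm_num)
  have h6sq : Real.sqrt 6 ^ 2 = 6 := Real.sq_sqrt (by norm_num)
  have hs1 : (0:ℝ) < Real.sqrt (1 + ξ ^ 2 / 3) :=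
    Real.sqrt_pos.mpr (by positivity)
  have h2 : (0:ℝ) ≤ Real.sqrt 2 := Real.sqrt_nonneg 2
  have hden : (0:ℝ) < Real.sqrt (1 + ξ ^ 2 / 3) + Real.sqrt 2 * ξ := by positivity
  rw [div_lt_div_iff₀ (by positivity) hden]
  have hmul1 : Real.sqrt 3 * Real.sqrt (1 + ξ ^ 2 / 3) = Real.sqrt (3 + ξ ^ 2) := by
    rw [← Real.sqrt_mul (by norm_num)]
    ring_nf
  have hmul2 : Real.sqrt 3 * Real.sqrt 2 = Real.sqrt 6 := by
    rw [← Real.sqrt_mul (by norm_num)]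
    norm_num
  have key : Real.sqrt (3 + ξ ^ 2) < Real.sqrt 6 + 1 + ξ := by
    rw [show Real.sqrt 6 + 1 + ξ = Real.sqrt ((Real.sqrt 6 + 1 + ξ) ^ 2) from
      (Real.sqrt_sq (by positivity)).symm]
    apply Real.sqrt_lt_sqrt (by positivity)
    nlinarith [h6, hξ]
  calc Real.sqrt 3 * (Real.sqrt (1 + ξ ^ 2 / 3) + Real.sqrt 2 * ξ)
      = Real.sqrt (3 + ξ ^ 2) + Real.sqrt 6 * ξ := by
        rw [mul_add, hmul1, ← mul_assoc, hmul2]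
    _ < (1 + ξ) * (Real.sqrt 6 + 1) := by nlinarith [key, h6, hξ]
end
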